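/- Let C be a finite tensor category, M and N left C-module categories, and (F,c), (G,d) : M → N C-module functors. Then the functor Hom_N(F(−), G(−)) : M^op × M → vect_k admits the pre-balancing β^X_{M,N}(α) = (ev_X ▷ id_{G(N)}) ∘ m^{-1}_{X*,X,G(N)} ∘ (id_{X*} ▷ (d_{X,N} ∘ α)) ∘ c_{X*,M}, and there is an isomorphism Nat_m(F,G) ≅ ∮_{M∈M}(Hom_N(F(−), G(−)), β). -/

import Mathlib

/-!
Common framework: left/right module categories over a tensor category,
module functors, module natural transformations, pre-balancings and
module (co)ends, internal Homs, following Bortolussi–Mombelli,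
"(co)ends for representations of tensor categories".

Throughout, a *finite tensor category* is modelled as an abelian,
`k`-linear, monoidally preadditive/linear rigid monoidal category with
simple unit object (finiteness of the underlying abelian category is not
used in the statements below and is omitted).
-/

open CategoryTheory Category MonoidalCategory Opposite

universe w w₁ w₂ v u v₁ u₁ v₂ u₂ v₃ u₃ v₄ u₄

namespace TensorModuleEnd

variable (C : Type u) [Category.{v} C] [MonoidalCategory C]

/-- A left module category structure of a monoidal category `C` on a category `M`.
The action bifunctor is encoded as a functor `act : C ⥤ M ⥤ M`, with
`X ▷ m = (act.obj X).obj m`, together with coherent associativity and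
unit isomorphisms (equations (1), (2) of the paper). -/
structure LeftModuleStr (M : Type u₁) [Category.{v₁} M] where
  act : C ⥤ M ⥤ M
  assoc : ∀ (X Y : C) (m : M),
    (act.obj (X ⊗ Y)).obj m ≅ (act.obj X).obj ((act.obj Y).obj m)
  unitIso : ∀ (m : M), (act.obj (𝟙_ C)).obj m ≅ m
  assoc_natural_left : ∀ {X X' : C} (f : X ⟶ X') (Y : C) (m : M),
    (act.map (f ▷ Y)).app m ≫ (assoc X' Y m).hom =
      (assoc X Y m).hom ≫ (act.map f).app ((act.obj Y).obj m)
  assoc_natural_mid : ∀ (X : C) {Y Y' : C} (g : Y ⟶ Y') (m : M),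
    (act.map (X ◁ g)).app m ≫ (assoc X Y' m).hom =
      (assoc X Y m).hom ≫ (act.obj X).map ((act.map g).app m)
  assoc_natural_obj : ∀ (X Y : C) {m m' : M} (h : m ⟶ m'),
    (act.obj (X ⊗ Y)).map h ≫ (assoc X Y m').hom =
      (assoc X Y m).hom ≫ (act.obj X).map ((act.obj Y).map h)
  unit_natural : ∀ {m m' : M} (h : m ⟶ m'),
    (act.obj (𝟙_ C)).map h ≫ (unitIso m').hom = (unitIso m).hom ≫ h
  pentagon : ∀ (X Y Z : C) (m : M),
    (assoc (X ⊗ Y) Z m).hom ≫ (assoc X Y ((act.obj Z).obj m)).hom =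
      (act.map (α_ X Y Z).hom).app m ≫ (assoc X (Y ⊗ Z) m).hom ≫
        (act.obj X).map ((assoc Y Z m).hom)
  triangle : ∀ (X : C) (m : M),
    (assoc X (𝟙_ C) m).hom ≫ (act.obj X).map ((unitIso m).hom) =
      (act.map (ρ_ X).hom).app m

/-- A right module category structure of `C` on `M`; here `(act.obj X).obj m`
plays the role of `m ◁ X` (equations (11), (12) of the paper). -/
structure RightModuleStr (M : Type u₁) [Category.{v₁} M] where
  act : C ⥤ M ⥤ M
  assoc : ∀ (X Y : C) (m : M),
    (act.obj (X ⊗ Y)).obj m ≅ (act.obj Y).obj ((act.obj X).obj m)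
  unitIso : ∀ (m : M), (act.obj (𝟙_ C)).obj m ≅ m
  assoc_natural_left : ∀ {X X' : C} (f : X ⟶ X') (Y : C) (m : M),
    (act.map (f ▷ Y)).app m ≫ (assoc X' Y m).hom =
      (assoc X Y m).hom ≫ (act.obj Y).map ((act.map f).app m)
  assoc_natural_mid : ∀ (X : C) {Y Y' : C} (g : Y ⟶ Y') (m : M),
    (act.map (X ◁ g)).app m ≫ (assoc X Y' m).hom =
      (assoc X Y m).hom ≫ (act.map g).app ((act.obj X).obj m)
  assoc_natural_obj : ∀ (X Y : C) {m m' : M} (h : m ⟶ m'),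
    (act.obj (X ⊗ Y)).map h ≫ (assoc X Y m').hom =
      (assoc X Y m).hom ≫ (act.obj Y).map ((act.obj X).map h)
  unit_natural : ∀ {m m' : M} (h : m ⟶ m'),
    (act.obj (𝟙_ C)).map h ≫ (unitIso m').hom = (unitIso m).hom ≫ h
  pentagon : ∀ (X Y Z : C) (m : M),
    (act.map (α_ X Y Z).hom).app m ≫ (assoc X (Y ⊗ Z) m).hom ≫
        (assoc Y Z ((act.obj X).obj m)).hom =
      (assoc (X ⊗ Y) Z m).hom ≫ (act.obj Z).map ((assoc X Y m).hom)
  triangle : ∀ (X : C) (m : M),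
    (assoc (𝟙_ C) X m).hom ≫ (act.obj X).map ((unitIso m).hom) =
      (act.map (λ_ X).hom).app m

variable {C}

/-- A left module category `M` over `C` is *exact* if `P ▷ m` is projective in `M`
for every projective `P : C` and every `m : M`. -/
def LeftModuleStr.IsExact {M : Type u₁} [Category.{v₁} M] (ρ : LeftModuleStr C M) : Prop :=
  ∀ (P : C), Projective P → ∀ m : M, Projective ((ρ.act.obj P).obj m)

/-- A `C`-module functor `(F, c)` between left `C`-module categories
(equations (3), (4) of the paper). -/
structure ModuleFunctor {M : Type u₁} [Category.{v₁} M] {N : Type u₂} [Category.{v₂} N]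
    (ρ : LeftModuleStr C M) (σ : LeftModuleStr C N) where
  F : M ⥤ N
  str : ∀ (X : C) (m : M), F.obj ((ρ.act.obj X).obj m) ≅ (σ.act.obj X).obj (F.obj m)
  str_natural_obj : ∀ (X : C) {m m' : M} (h : m ⟶ m'),
    F.map ((ρ.act.obj X).map h) ≫ (str X m').hom =
      (str X m).hom ≫ (σ.act.obj X).map (F.map h)
  str_natural_tensor : ∀ {X X' : C} (f : X ⟶ X') (m : M),
    F.map ((ρ.act.map f).app m) ≫ (str X' m).hom =
      (str X m).hom ≫ (σ.act.map f).app (F.obj m)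
  pentagon : ∀ (X Y : C) (m : M),
    F.map ((ρ.assoc X Y m).hom) ≫ (str X ((ρ.act.obj Y).obj m)).hom ≫
        (σ.act.obj X).map ((str Y m).hom) =
      (str (X ⊗ Y) m).hom ≫ (σ.assoc X Y (F.obj m)).hom
  unit : ∀ (m : M),
    (str (𝟙_ C) m).hom ≫ (σ.unitIso (F.obj m)).hom = F.map ((ρ.unitIso m).hom)

/-- A module natural transformation between module functors (equation (5)). -/
def IsModuleNatTrans {M : Type u₁} [Category.{v₁} M] {N : Type u₂} [Category.{v₂} N]
    {ρ : LeftModuleStr C M} {σ : LeftModuleStr C N}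
    (F G : ModuleFunctor ρ σ) (θ : F.F ⟶ G.F) : Prop :=
  ∀ (X : C) (m : M),
    θ.app ((ρ.act.obj X).obj m) ≫ (G.str X m).hom =
      (F.str X m).hom ≫ (σ.act.obj X).map (θ.app m)

/-- The category `Fun_C(M, N)` of `C`-module functors and module natural
transformations. -/
instance moduleFunctorCategory {M : Type u₁} [Category.{v₁} M] {N : Type u₂} [Category.{v₂} N]
    (ρ : LeftModuleStr C M) (σ : LeftModuleStr C N) :
    Category (ModuleFunctor ρ σ) where
  Hom F G := { θ : F.F ⟶ G.F // IsModuleNatTrans F G θ }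
  id F := ⟨𝟙 F.F, by intro X m; simp⟩
  comp {F G H} θ θ' := ⟨θ.1 ≫ θ'.1, by
    intro X m
    have h1 := θ.2 X m
    have h2 := θ'.2 X m
    simp only [NatTrans.comp_app, Category.assoc, Functor.map_comp]
    rw [h2, reassoc_of% h1]⟩
  id_comp f := by apply Subtype.ext; simp
  comp_id f := by apply Subtype.ext; simp
  assoc f g h := by apply Subtype.ext; simp

section ModuleEnds

variable {M : Type u₁} [Category.{v₁} M] {A : Type u₂} [Category.{v₂} A]

/-- `S(f, g)` for a functor `S : Mᵒᵖ × M ⥤ A`, contravariant in the first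
variable: here `f : m' ⟶ m` and `g : n ⟶ n'`. -/
abbrev smap (S : Mᵒᵖ × M ⥤ A) {m m' n n' : M} (f : m' ⟶ m) (g : n ⟶ n') :
    S.obj (op m, n) ⟶ S.obj (op m', n') :=
  S.map ((f.op, g) : ((op m, n) : Mᵒᵖ × M) ⟶ (op m', n'))

variable [RightRigidCategory C]

/-- A *pre-balancing* for a functor `S : Mᵒᵖ × M ⥤ A`, where `M` is a left
`C`-module category: a family of natural isomorphisms
`β^X_{m,n} : S(m, X ▷ n) ≅ S(Xᘁ ▷ m, n)`. -/
structure PreBalancing (ρ : LeftModuleStr C M) (S : Mᵒᵖ × M ⥤ A) where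
  iso : ∀ (X : C) (m n : M),
    S.obj (op m, (ρ.act.obj X).obj n) ≅ S.obj (op ((ρ.act.obj Xᘁ).obj m), n)
  natural : ∀ (X : C) {m m' n n' : M} (f : m' ⟶ m) (g : n ⟶ n'),
    smap S f ((ρ.act.obj X).map g) ≫ (iso X m' n').hom =
      (iso X m n).hom ≫ smap S ((ρ.act.obj Xᘁ).map f) g
  natural_tensor : ∀ {X X' : C} (f : X ⟶ X') (m n : M),
    smap S (𝟙 m) ((ρ.act.map f).app n) ≫ (iso X' m n).hom =
      (iso X m n).hom ≫ smap S ((ρ.act.map (fᘁ)).app m) (𝟙 n)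

variable (ρ : LeftModuleStr C M) (S : Mᵒᵖ × M ⥤ A)

/-- The canonical morphism `(Xᘁ ⊗ X) ▷ m ⟶ m` induced by the evaluation
(and the unit isomorphism). -/
def evActHom (X : C) (m : M) : (ρ.act.obj (Xᘁ ⊗ X)).obj m ⟶ m :=
  (ρ.act.map (ε_ X Xᘁ)).app m ≫ (ρ.unitIso m).hom

/-- The canonical morphism `m ⟶ (X ⊗ Xᘁ) ▷ m` induced by the coevaluation. -/
def coevActHom (X : C) (m : M) : m ⟶ (ρ.act.obj (X ⊗ Xᘁ)).obj m :=
  (ρ.unitIso m).inv ≫ (ρ.act.map (η_ X Xᘁ)).app m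

variable {ρ S}

/-- A *wedge* for `(S, β)` relative to a class `P` of objects of `C`:
a dinatural family `π` satisfying the module-end compatibility (equation (5)
of Section 3 of the paper) for every `X` in `P`.  Taking `P = fun _ => True`
gives module-end wedges; taking `P = fun _ => False` gives ordinary wedges
(for the ordinary end); an intermediate `P` corresponds to restricting the
module structure to a tensor subcategory. -/
structure ModuleEndCone (β : PreBalancing ρ S) (P : C → Prop) where
  pt : A
  π : ∀ m : M, pt ⟶ S.obj (op m, m)
  dinatural : ∀ {m n : M} (f : m ⟶ n),
    π m ≫ smap S (𝟙 m) f = π n ≫ smap S f (𝟙 n)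
  compat : ∀ (X : C), P X → ∀ (m : M),
    π m ≫ smap S (evActHom ρ X m) (𝟙 m) =
      π ((ρ.act.obj X).obj m) ≫ (β.iso X ((ρ.act.obj X).obj m) m).hom ≫
        smap S ((ρ.assoc Xᘁ X m).hom) (𝟙 m)

/-- Universality: `E` is a *module end* of `(S, β)` (relative to `P`). -/
def IsModuleEnd {β : PreBalancing ρ S} {P : C → Prop} (E : ModuleEndCone β P) : Prop :=
  ∀ (E' : ModuleEndCone β P), ∃! h : E'.pt ⟶ E.pt, ∀ m : M, h ≫ E.π m = E'.π m

/-- A *cowedge* for `(S, β)` relative to `P` (for module coends,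
equation (6) of the paper). -/
structure ModuleCoendCocone (β : PreBalancing ρ S) (P : C → Prop) where
  pt : A
  ι : ∀ m : M, S.obj (op m, m) ⟶ pt
  dinatural : ∀ {m n : M} (f : m ⟶ n),
    smap S f (𝟙 m) ≫ ι m = smap S (𝟙 n) f ≫ ι n
  compat : ∀ (X : C), P X → ∀ (m : M),
    ι m = smap S (𝟙 m) (coevActHom ρ X m ≫ (ρ.assoc X Xᘁ m).hom) ≫
        (β.iso X m ((ρ.act.obj Xᘁ).obj m)).hom ≫ ι ((ρ.act.obj Xᘁ).obj m)

/-- Universality: `E` is a *module coend* of `(S, β)` (relative to `P`). -/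
def IsModuleCoend {β : PreBalancing ρ S} {P : C → Prop} (E : ModuleCoendCocone β P) : Prop :=
  ∀ (E' : ModuleCoendCocone β P), ∃! h : E.pt ⟶ E'.pt, ∀ m : M, E.ι m ≫ h = E'.ι m

end ModuleEnds

section InternalHom

variable {M : Type u₁} [Category.{v₁} M]

/-- Internal Hom data for a left `C`-module category: a bifunctor
`H : Mᵒᵖ × M ⥤ C` together with bijections
`(X ⟶ uhom(m,n)) ≃ (X ▷ m ⟶ n)` natural in all three variables. -/
structure InternalHom (ρ : LeftModuleStr C M) where
  H : Mᵒᵖ × M ⥤ C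
  repr : ∀ (X : C) (m n : M), (X ⟶ H.obj (op m, n)) ≃ ((ρ.act.obj X).obj m ⟶ n)
  repr_natural : ∀ {X X' : C} (f : X ⟶ X') (m n : M) (u : X' ⟶ H.obj (op m, n)),
    repr X m n (f ≫ u) = (ρ.act.map f).app m ≫ repr X' m n u
  repr_natural_m : ∀ (X : C) {m m' : M} (f : m' ⟶ m) (n : M)
      (u : X ⟶ H.obj (op m, n)),
    repr X m' n (u ≫ smap H f (𝟙 n)) = (ρ.act.obj X).map f ≫ repr X m n u
  repr_natural_n : ∀ (X : C) (m : M) {n n' : M} (g : n ⟶ n')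
      (u : X ⟶ H.obj (op m, n)),
    repr X m n' (u ≫ smap H (𝟙 m) g) = repr X m n u ≫ g

variable [RightRigidCategory C]

/-- Internal Hom data for the right `C`-module category `Mᵒᵖ` opposite to a left
`C`-module category `M` (with action `m̄ ◁ X = (Xᘁ ▷ m)‾`): a bifunctor
`H' : M × Mᵒᵖ ⥤ C` (with `H'.obj (m, op n) = uhom_{Mᵒᵖ}(m̄, n̄)`) together with
bijections `(X ⟶ uhom_{Mᵒᵖ}(m̄, n̄)) ≃ (m̄ ◁ X ⟶ n̄) = (n ⟶ Xᘁ ▷ m)`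
natural in all three variables. -/
structure OpInternalHom (ρ : LeftModuleStr C M) where
  H : M × Mᵒᵖ ⥤ C
  repr : ∀ (X : C) (m n : M), (X ⟶ H.obj (m, op n)) ≃ (n ⟶ (ρ.act.obj Xᘁ).obj m)
  repr_natural : ∀ {X X' : C} (f : X ⟶ X') (m n : M) (u : X' ⟶ H.obj (m, op n)),
    repr X m n (f ≫ u) = repr X' m n u ≫ (ρ.act.map (fᘁ)).app m
  repr_natural_m : ∀ (X : C) {m m' : M} (f : m ⟶ m') (n : M)
      (u : X ⟶ H.obj (m, op n)),
    repr X m' n (u ≫ H.map ((f, 𝟙 (op n)) : ((m, op n) : M × Mᵒᵖ) ⟶ (m', op n))) =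
      repr X m n u ≫ (ρ.act.obj Xᘁ).map f
  repr_natural_n : ∀ (X : C) (m : M) {n n' : M} (g : n' ⟶ n)
      (u : X ⟶ H.obj (m, op n)),
    repr X m n' (u ≫ H.map ((𝟙 m, g.op) : ((m, op n) : M × Mᵒᵖ) ⟶ (m, op n'))) =
      g ≫ repr X m n u

end InternalHom

/-! ### Auxiliary coherence lemmas for module categories -/

section CoherenceAux

variable {N : Type u₂} [Category.{v₂} N]

lemma LeftModuleStr.unit_act_cancel (σ : LeftModuleStr C N) {a b : N} {f g : a ⟶ b}
    (h : (σ.act.obj (𝟙_ C)).map f = (σ.act.obj (𝟙_ C)).map g) : f = g := by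
  have hf := σ.unit_natural f
  have hg := σ.unit_natural g
  rw [h] at hf
  exact (cancel_epi (σ.unitIso a).hom).mp (hf.symm.trans hg)

/-- Left-unitor coherence for a left module category (a Kelly-style consequence of
the pentagon and triangle axioms). -/
lemma LeftModuleStr.assoc_unit (σ : LeftModuleStr C N) (X : C) (b : N) :
    (σ.assoc (𝟙_ C) X b).hom ≫ (σ.unitIso ((σ.act.obj X).obj b)).hom =
      (σ.act.map (λ_ X).hom).app b := by
  apply σ.unit_act_cancel
  apply (cancel_epi ((σ.assoc (𝟙_ C) ((𝟙_ C) ⊗ X) b).hom)).mp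
  apply (cancel_epi ((σ.act.map (α_ (𝟙_ C) (𝟙_ C) X).hom).app b)).mp
  have hP := σ.pentagon (𝟙_ C) (𝟙_ C) X b
  have hT := σ.triangle (𝟙_ C) ((σ.act.obj X).obj b)
  have hL := σ.assoc_natural_left (ρ_ (𝟙_ C)).hom X b
  have hM := σ.assoc_natural_mid (𝟙_ C) (λ_ X).hom b
  calc (σ.act.map (α_ (𝟙_ C) (𝟙_ C) X).hom).app b ≫ (σ.assoc (𝟙_ C) ((𝟙_ C) ⊗ X) b).hom ≫
      (σ.act.obj (𝟙_ C)).map ((σ.assoc (𝟙_ C) X b).hom ≫ (σ.unitIso _).hom)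
      = ((σ.act.map (α_ (𝟙_ C) (𝟙_ C) X).hom).app b ≫ (σ.assoc (𝟙_ C) ((𝟙_ C) ⊗ X) b).hom ≫
          (σ.act.obj (𝟙_ C)).map (σ.assoc (𝟙_ C) X b).hom) ≫
          (σ.act.obj (𝟙_ C)).map (σ.unitIso ((σ.act.obj X).obj b)).hom := by
        simp only [Functor.map_comp, Category.assoc]
    _ = ((σ.assoc ((𝟙_ C) ⊗ (𝟙_ C)) X b).hom ≫
          (σ.assoc (𝟙_ C) (𝟙_ C) ((σ.act.obj X).obj b)).hom) ≫
          (σ.act.obj (𝟙_ C)).map (σ.unitIso ((σ.act.obj X).obj b)).hom := by rw [← hP]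
    _ = (σ.assoc ((𝟙_ C) ⊗ (𝟙_ C)) X b).hom ≫
          (σ.act.map (ρ_ (𝟙_ C)).hom).app ((σ.act.obj X).obj b) := by
        rw [Category.assoc, hT]
    _ = (σ.act.map ((ρ_ (𝟙_ C)).hom ▷ X)).app b ≫ (σ.assoc (𝟙_ C) X b).hom := by
        rw [← hL]
    _ = (σ.act.map ((α_ (𝟙_ C) (𝟙_ C) X).hom ≫ (𝟙_ C) ◁ (λ_ X).hom)).app b ≫
          (σ.assoc (𝟙_ C) X b).hom := by rw [MonoidalCategory.triangle]
    _ = (σ.act.map (α_ (𝟙_ C) (𝟙_ C) X).hom).app b ≫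
          ((σ.act.map ((𝟙_ C) ◁ (λ_ X).hom)).app b ≫ (σ.assoc (𝟙_ C) X b).hom) := by
        rw [Functor.map_comp]; simp
    _ = (σ.act.map (α_ (𝟙_ C) (𝟙_ C) X).hom).app b ≫ (σ.assoc (𝟙_ C) ((𝟙_ C) ⊗ X) b).hom ≫
          (σ.act.obj (𝟙_ C)).map ((σ.act.map (λ_ X).hom).app b) := by rw [hM]

variable [RightRigidCategory C]

lemma evAct_natural (σ : LeftModuleStr C N) (X : C) {a b : N} (f : a ⟶ b) :
    (σ.act.obj ((Xᘁ) ⊗ X)).map f ≫ evActHom σ X b = evActHom σ X a ≫ f := by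
  simp only [evActHom]
  rw [← Category.assoc, (σ.act.map (ε_ X (Xᘁ))).naturality f, Category.assoc,
    σ.unit_natural f, ← Category.assoc]

lemma coevAct_natural (σ : LeftModuleStr C N) (X : C) {a b : N} (f : a ⟶ b) :
    f ≫ coevActHom σ X b = coevActHom σ X a ≫ (σ.act.obj (X ⊗ (Xᘁ))).map f := by
  simp only [coevActHom]
  have h1 : f ≫ (σ.unitIso b).inv = (σ.unitIso a).inv ≫ (σ.act.obj (𝟙_ C)).map f := by
    rw [Iso.comp_inv_eq, Category.assoc, σ.unit_natural f, Iso.inv_hom_id_assoc]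
  rw [← Category.assoc, h1, Category.assoc, (σ.act.map (η_ X (Xᘁ))).naturality f,
    ← Category.assoc]

lemma unit_inv_assoc_inv (σ : LeftModuleStr C N) (X : C) (b : N) :
    (σ.unitIso ((σ.act.obj X).obj b)).inv ≫ (σ.assoc (𝟙_ C) X b).inv =
      (σ.act.map (λ_ X).inv).app b := by
  have h := σ.assoc_unit X b
  apply (cancel_epi ((σ.assoc (𝟙_ C) X b).hom ≫
    (σ.unitIso ((σ.act.obj X).obj b)).hom)).mp
  conv_rhs => rw [h]
  simp [← NatTrans.comp_app, ← Functor.map_comp]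

lemma zigAct (σ : LeftModuleStr C N) (X : C) (b : N) :
    coevActHom σ X ((σ.act.obj X).obj b) ≫ (σ.assoc X (Xᘁ) ((σ.act.obj X).obj b)).hom ≫
      (σ.act.obj X).map ((σ.assoc (Xᘁ) X b).inv ≫ evActHom σ X b) = 𝟙 _ := by
  have hP := σ.pentagon X (Xᘁ) X b
  have hmm : (σ.act.obj X).map (σ.assoc (Xᘁ) X b).inv ≫
      (σ.act.obj X).map (σ.assoc (Xᘁ) X b).hom = 𝟙 _ := by
    rw [← CategoryTheory.Functor.map_comp, Iso.inv_hom_id, CategoryTheory.Functor.map_id]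
  have h1 : (σ.assoc X (Xᘁ) ((σ.act.obj X).obj b)).hom ≫
        (σ.act.obj X).map (σ.assoc (Xᘁ) X b).inv =
      (σ.assoc (X ⊗ (Xᘁ)) X b).inv ≫ (σ.act.map (α_ X (Xᘁ) X).hom).app b ≫
        (σ.assoc X ((Xᘁ) ⊗ X) b).hom := by
    rw [← cancel_mono ((σ.act.obj X).map (σ.assoc (Xᘁ) X b).hom)]
    simp only [Category.assoc]
    rw [hmm, Category.comp_id, ← hP, Iso.inv_hom_id_assoc]
  have hM := σ.assoc_natural_mid X (ε_ X (Xᘁ)) b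
  have hT := σ.triangle X b
  have hL := σ.assoc_natural_left (η_ X (Xᘁ)) X b
  have h2 : (σ.act.map (η_ X (Xᘁ))).app ((σ.act.obj X).obj b) ≫
        (σ.assoc (X ⊗ (Xᘁ)) X b).inv =
      (σ.assoc (𝟙_ C) X b).inv ≫ (σ.act.map ((η_ X (Xᘁ)) ▷ X)).app b := by
    rw [Iso.eq_inv_comp, ← Category.assoc, ← hL, Category.assoc, Iso.hom_inv_id,
      Category.comp_id]
  simp only [coevActHom, evActHom, Functor.map_comp]
  slice_lhs 3 4 => rw [h1]
  slice_lhs 5 6 => rw [← hM]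
  slice_lhs 6 7 => rw [hT]
  slice_lhs 2 3 => rw [h2]
  slice_lhs 1 2 => rw [unit_inv_assoc_inv]
  simp only [← NatTrans.comp_app, ← Functor.map_comp, Category.assoc]
  rw [ExactPairing.evaluation_coevaluation_assoc]
  simp [← NatTrans.comp_app, ← Functor.map_comp]

lemma zagAct (σ : LeftModuleStr C N) (X : C) (a : N) :
    (σ.act.obj (Xᘁ)).map (coevActHom σ X a ≫ (σ.assoc X (Xᘁ) a).hom) ≫
      (σ.assoc (Xᘁ) X ((σ.act.obj (Xᘁ)).obj a)).inv ≫
        evActHom σ X ((σ.act.obj (Xᘁ)).obj a) = 𝟙 _ := by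
  have hP := σ.pentagon (Xᘁ) X (Xᘁ) a
  have hmm : ∀ {Z : N} (h : (σ.act.obj ((Xᘁ) ⊗ X ⊗ (Xᘁ))).obj a ⟶ Z),
      (σ.act.map (α_ (Xᘁ) X (Xᘁ)).inv).app a ≫ (σ.act.map (α_ (Xᘁ) X (Xᘁ)).hom).app a ≫ h
        = h := by
    intro Z h
    rw [← Category.assoc, ← NatTrans.comp_app, ← CategoryTheory.Functor.map_comp,
      Iso.inv_hom_id, CategoryTheory.Functor.map_id, NatTrans.id_app, Category.id_comp]
  have h1 : (σ.act.obj (Xᘁ)).map (σ.assoc X (Xᘁ) a).hom ≫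
        (σ.assoc (Xᘁ) X ((σ.act.obj (Xᘁ)).obj a)).inv =
      (σ.assoc (Xᘁ) (X ⊗ (Xᘁ)) a).inv ≫ (σ.act.map (α_ (Xᘁ) X (Xᘁ)).inv).app a ≫
        (σ.assoc ((Xᘁ) ⊗ X) (Xᘁ) a).hom := by
    rw [← cancel_mono ((σ.assoc (Xᘁ) X ((σ.act.obj (Xᘁ)).obj a)).hom)]
    slice_lhs 2 3 => rw [Iso.inv_hom_id]
    rw [Category.comp_id]
    simp only [Category.assoc]
    rw [hP, hmm, Iso.inv_hom_id_assoc]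
  have hT := σ.triangle (Xᘁ) a
  have h0 : (σ.act.obj (Xᘁ)).map (σ.unitIso a).inv =
      (σ.act.map (ρ_ (Xᘁ)).inv).app a ≫ (σ.assoc (Xᘁ) (𝟙_ C) a).hom := by
    rw [← cancel_mono ((σ.act.obj (Xᘁ)).map (σ.unitIso a).hom),
      ← CategoryTheory.Functor.map_comp, Iso.inv_hom_id, CategoryTheory.Functor.map_id,
      Category.assoc, hT, ← NatTrans.comp_app, ← CategoryTheory.Functor.map_comp,
      Iso.inv_hom_id, CategoryTheory.Functor.map_id, NatTrans.id_app]
  have hM := σ.assoc_natural_mid (Xᘁ) (η_ X (Xᘁ)) a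
  have hL := σ.assoc_natural_left (ε_ X (Xᘁ)) (Xᘁ) a
  simp only [coevActHom, evActHom, Functor.map_comp]
  slice_lhs 1 1 => rw [h0]
  slice_lhs 2 3 => rw [← hM]
  slice_lhs 4 5 => rw [h1]
  slice_lhs 3 4 => rw [Iso.hom_inv_id]
  simp only [Category.id_comp, Category.comp_id]
  slice_lhs 4 5 => rw [← hL]
  slice_lhs 5 6 => rw [σ.assoc_unit (Xᘁ) a]
  simp only [← NatTrans.comp_app, ← Functor.map_comp, Category.assoc]
  rw [ExactPairing.coevaluation_evaluation_assoc]
  simp [← NatTrans.comp_app, ← Functor.map_comp]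

end CoherenceAux

section HomEquiv

variable [RightRigidCategory C]
variable {N : Type u₂} [Category.{v₂} N]

/-- The adjunction-type bijection `(a ⟶ X ▷ b) ≃ (Xᘁ ▷ a ⟶ b)` in a left
module category, given by evaluation and coevaluation. -/
@[simps]
def actHomEquiv (σ : LeftModuleStr C N) (X : C) (a b : N) :
    (a ⟶ (σ.act.obj X).obj b) ≃ ((σ.act.obj (Xᘁ)).obj a ⟶ b) where
  toFun f := (σ.act.obj (Xᘁ)).map f ≫ (σ.assoc (Xᘁ) X b).inv ≫ evActHom σ X b
  invFun g := coevActHom σ X a ≫ (σ.assoc X (Xᘁ) a).hom ≫ (σ.act.obj X).map g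
  left_inv f := by
    have h1 := σ.assoc_natural_obj X (Xᘁ) f
    calc coevActHom σ X a ≫ (σ.assoc X (Xᘁ) a).hom ≫
          (σ.act.obj X).map ((σ.act.obj (Xᘁ)).map f ≫ (σ.assoc (Xᘁ) X b).inv ≫
            evActHom σ X b)
        = coevActHom σ X a ≫ ((σ.assoc X (Xᘁ) a).hom ≫
            (σ.act.obj X).map ((σ.act.obj (Xᘁ)).map f)) ≫
            (σ.act.obj X).map ((σ.assoc (Xᘁ) X b).inv ≫ evActHom σ X b) := by
          simp only [Functor.map_comp, Category.assoc]
      _ = (coevActHom σ X a ≫ (σ.act.obj (X ⊗ (Xᘁ))).map f) ≫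
            (σ.assoc X (Xᘁ) ((σ.act.obj X).obj b)).hom ≫
            (σ.act.obj X).map ((σ.assoc (Xᘁ) X b).inv ≫ evActHom σ X b) := by
          rw [← h1]; simp only [Category.assoc]
      _ = f ≫ coevActHom σ X ((σ.act.obj X).obj b) ≫
            (σ.assoc X (Xᘁ) ((σ.act.obj X).obj b)).hom ≫
            (σ.act.obj X).map ((σ.assoc (Xᘁ) X b).inv ≫ evActHom σ X b) := by
          rw [← coevAct_natural]; simp only [Category.assoc]
      _ = f := by rw [zigAct]; simp
  right_inv g := by
    have h1 := σ.assoc_natural_obj (Xᘁ) X g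
    have h1' : (σ.act.obj (Xᘁ)).map ((σ.act.obj X).map g) ≫ (σ.assoc (Xᘁ) X b).inv =
        (σ.assoc (Xᘁ) X ((σ.act.obj (Xᘁ)).obj a)).inv ≫ (σ.act.obj ((Xᘁ) ⊗ X)).map g := by
      rw [Iso.comp_inv_eq, Category.assoc, h1, Iso.inv_hom_id_assoc]
    calc (σ.act.obj (Xᘁ)).map (coevActHom σ X a ≫ (σ.assoc X (Xᘁ) a).hom ≫
          (σ.act.obj X).map g) ≫ (σ.assoc (Xᘁ) X b).inv ≫ evActHom σ X b
        = (σ.act.obj (Xᘁ)).map (coevActHom σ X a ≫ (σ.assoc X (Xᘁ) a).hom) ≫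
            ((σ.act.obj (Xᘁ)).map ((σ.act.obj X).map g) ≫ (σ.assoc (Xᘁ) X b).inv) ≫
            evActHom σ X b := by
          simp only [Functor.map_comp, Category.assoc]
      _ = (σ.act.obj (Xᘁ)).map (coevActHom σ X a ≫ (σ.assoc X (Xᘁ) a).hom) ≫
            ((σ.assoc (Xᘁ) X ((σ.act.obj (Xᘁ)).obj a)).inv ≫
              (σ.act.obj ((Xᘁ) ⊗ X)).map g) ≫ evActHom σ X b := by
          rw [h1']
      _ = ((σ.act.obj (Xᘁ)).map (coevActHom σ X a ≫ (σ.assoc X (Xᘁ) a).hom) ≫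
            (σ.assoc (Xᘁ) X ((σ.act.obj (Xᘁ)).obj a)).inv ≫
              evActHom σ X ((σ.act.obj (Xᘁ)).obj a)) ≫ g := by
          simp only [Category.assoc]
          rw [evAct_natural]
      _ = g := by rw [zagAct]; simp

/-- Compatibility of the evaluation-induced maps with morphisms of `C`. -/
lemma evAct_tensor (σ : LeftModuleStr C N) {X X' : C} (f : X ⟶ X') (b : N) :
    (σ.act.obj (X'ᘁ)).map ((σ.act.map f).app b) ≫ (σ.assoc (X'ᘁ) X' b).inv ≫
        evActHom σ X' b =
      (σ.act.map (fᘁ)).app ((σ.act.obj X).obj b) ≫ (σ.assoc (Xᘁ) X b).inv ≫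
        evActHom σ X b := by
  have hM := σ.assoc_natural_mid (X'ᘁ) f b
  have hL := σ.assoc_natural_left (fᘁ) X b
  have h1 : (σ.act.obj (X'ᘁ)).map ((σ.act.map f).app b) ≫ (σ.assoc (X'ᘁ) X' b).inv =
      (σ.assoc (X'ᘁ) X b).inv ≫ (σ.act.map ((X'ᘁ) ◁ f)).app b := by
    rw [Iso.comp_inv_eq, Category.assoc, hM, Iso.inv_hom_id_assoc]
  have h2 : (σ.act.map ((fᘁ : (X'ᘁ) ⟶ (Xᘁ)))).app ((σ.act.obj X).obj b) ≫
        (σ.assoc (Xᘁ) X b).inv =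
      (σ.assoc (X'ᘁ) X b).inv ≫ (σ.act.map ((fᘁ : (X'ᘁ) ⟶ (Xᘁ)) ▷ X)).app b := by
    rw [Iso.comp_inv_eq, Category.assoc, hL, Iso.inv_hom_id_assoc]
  rw [← Category.assoc, h1, ← Category.assoc, h2]
  simp only [evActHom, Category.assoc, ← σ.unit_natural]
  simp only [← Category.assoc]
  congr 1
  simp only [Category.assoc, ← NatTrans.comp_app, ← Functor.map_comp,
    rightAdjointMate_comp_evaluation]

end HomEquiv

section Prop41

variable [RightRigidCategory C]
variable {M : Type u₁} [Category.{v₁} M] {N : Type u₂} [Category.{v₂} N]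
variable (ρ : LeftModuleStr C M) (σ : LeftModuleStr C N) (F G : ModuleFunctor ρ σ)

/-- The underlying map of the pre-balancing of Proposition 4.1. -/
def bhom (X : C) (m n : M) (α : F.F.obj m ⟶ G.F.obj ((ρ.act.obj X).obj n)) :
    F.F.obj ((ρ.act.obj (Xᘁ)).obj m) ⟶ G.F.obj n :=
  (F.str (Xᘁ) m).hom ≫ (σ.act.obj (Xᘁ)).map (α ≫ (G.str X n).hom) ≫
    (σ.assoc (Xᘁ) X (G.F.obj n)).inv ≫ evActHom σ X (G.F.obj n)

/-- The pre-balancing of Proposition 4.1 as a bijection. -/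
def bEquiv (X : C) (m n : M) :
    (F.F.obj m ⟶ G.F.obj ((ρ.act.obj X).obj n)) ≃
      (F.F.obj ((ρ.act.obj (Xᘁ)).obj m) ⟶ G.F.obj n) :=
  ((Iso.homCongr (Iso.refl _) (G.str X n)).trans
    (actHomEquiv σ X (F.F.obj m) (G.F.obj n))).trans
    (Iso.homCongr (F.str (Xᘁ) m).symm (Iso.refl _))

lemma bEquiv_apply (X : C) (m n : M) (α : F.F.obj m ⟶ G.F.obj ((ρ.act.obj X).obj n)) :
    bEquiv ρ σ F G X m n α = bhom ρ σ F G X m n α := by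
  simp [bEquiv, bhom, actHomEquiv]

lemma bhom_natural (X : C) {m m' n n' : M} (f : m' ⟶ m) (g : n ⟶ n')
    (α : F.F.obj m ⟶ G.F.obj ((ρ.act.obj X).obj n)) :
    bhom ρ σ F G X m' n' (F.F.map f ≫ α ≫ G.F.map ((ρ.act.obj X).map g)) =
      F.F.map ((ρ.act.obj (Xᘁ)).map f) ≫ bhom ρ σ F G X m n α ≫ G.F.map g := by
  have hG := G.str_natural_obj X g
  have hF := F.str_natural_obj (Xᘁ) f
  have hA := σ.assoc_natural_obj (Xᘁ) X (G.F.map g)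
  have hA' : (σ.act.obj (Xᘁ)).map ((σ.act.obj X).map (G.F.map g)) ≫
        (σ.assoc (Xᘁ) X (G.F.obj n')).inv =
      (σ.assoc (Xᘁ) X (G.F.obj n)).inv ≫
        (σ.act.obj ((Xᘁ) ⊗ X)).map (G.F.map g) := by
    rw [Iso.comp_inv_eq, Category.assoc, hA, Iso.inv_hom_id_assoc]
  simp only [bhom, Category.assoc]
  rw [hG]
  simp only [CategoryTheory.Functor.map_comp, Category.assoc]
  rw [reassoc_of% hF]
  rw [reassoc_of% hA']
  rw [evAct_natural σ X (G.F.map g)]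

lemma bhom_tensor {X X' : C} (f : X ⟶ X') (m n : M)
    (α : F.F.obj m ⟶ G.F.obj ((ρ.act.obj X).obj n)) :
    bhom ρ σ F G X' m n (α ≫ G.F.map ((ρ.act.map f).app n)) =
      F.F.map ((ρ.act.map ((fᘁ : (X'ᘁ) ⟶ (Xᘁ)))).app m) ≫ bhom ρ σ F G X m n α := by
  have hG := G.str_natural_tensor f n
  have hF := F.str_natural_tensor (fᘁ : (X'ᘁ) ⟶ (Xᘁ)) m
  have n1 := (σ.act.map (fᘁ : (X'ᘁ) ⟶ (Xᘁ))).naturality α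
  have n2 := (σ.act.map (fᘁ : (X'ᘁ) ⟶ (Xᘁ))).naturality (G.str X n).hom
  have hNat : (σ.act.map (fᘁ : (X'ᘁ) ⟶ (Xᘁ))).app (F.F.obj m) ≫
        (σ.act.obj (Xᘁ)).map α ≫ (σ.act.obj (Xᘁ)).map (G.str X n).hom =
      (σ.act.obj (X'ᘁ)).map α ≫ (σ.act.obj (X'ᘁ)).map (G.str X n).hom ≫
        (σ.act.map (fᘁ : (X'ᘁ) ⟶ (Xᘁ))).app ((σ.act.obj X).obj (G.F.obj n)) := by
    rw [← Category.assoc, ← n1, Category.assoc, ← n2]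
  simp only [bhom, Category.assoc]
  rw [hG]
  simp only [CategoryTheory.Functor.map_comp, Category.assoc]
  rw [evAct_tensor σ f (G.F.obj n), reassoc_of% hF, reassoc_of% hNat]

lemma F_map_evAct (X : C) (m : M) :
    F.F.map (evActHom ρ X m) =
      (F.str ((Xᘁ) ⊗ X) m).hom ≫ evActHom σ X (F.F.obj m) := by
  simp only [evActHom, CategoryTheory.Functor.map_comp]
  rw [← F.unit m, ← Category.assoc, F.str_natural_tensor (ε_ X (Xᘁ)) m]
  simp only [Category.assoc]

lemma key_iff (X : C) (m : M) (t : F.F.obj m ⟶ G.F.obj m)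
    (s : F.F.obj ((ρ.act.obj X).obj m) ⟶ G.F.obj ((ρ.act.obj X).obj m)) :
    (F.F.map (evActHom ρ X m) ≫ t =
        F.F.map ((ρ.assoc (Xᘁ) X m).hom) ≫ bhom ρ σ F G X ((ρ.act.obj X).obj m) m s) ↔
      s ≫ (G.str X m).hom = (F.str X m).hom ≫ (σ.act.obj X).map t := by
  have hA := σ.assoc_natural_obj (Xᘁ) X t
  have hA2 : (σ.act.obj ((Xᘁ) ⊗ X)).map t =
      (σ.assoc (Xᘁ) X (F.F.obj m)).hom ≫
        (σ.act.obj (Xᘁ)).map ((σ.act.obj X).map t) ≫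
          (σ.assoc (Xᘁ) X (G.F.obj m)).inv := by
    rw [← Category.assoc, ← hA, Category.assoc, Iso.hom_inv_id, Category.comp_id]
  have hL : F.F.map (evActHom ρ X m) ≫ t =
      (F.str ((Xᘁ) ⊗ X) m).hom ≫ (σ.assoc (Xᘁ) X (F.F.obj m)).hom ≫
        (σ.act.obj (Xᘁ)).map ((σ.act.obj X).map t) ≫
          (σ.assoc (Xᘁ) X (G.F.obj m)).inv ≫ evActHom σ X (G.F.obj m) := by
    rw [F_map_evAct, Category.assoc, ← evAct_natural σ X t, ← reassoc_of% hA2]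
  have hP := F.pentagon (Xᘁ) X m
  have hP2 : F.F.map ((ρ.assoc (Xᘁ) X m).hom) ≫
        (F.str (Xᘁ) ((ρ.act.obj X).obj m)).hom =
      (F.str ((Xᘁ) ⊗ X) m).hom ≫ (σ.assoc (Xᘁ) X (F.F.obj m)).hom ≫
        (σ.act.obj (Xᘁ)).map (F.str X m).inv := by
    rw [← cancel_mono ((σ.act.obj (Xᘁ)).map (F.str X m).hom)]
    simp only [Category.assoc, ← CategoryTheory.Functor.map_comp, Iso.inv_hom_id,
      CategoryTheory.Functor.map_id, Category.comp_id]
    exact hP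
  have hR : F.F.map ((ρ.assoc (Xᘁ) X m).hom) ≫ bhom ρ σ F G X ((ρ.act.obj X).obj m) m s =
      (F.str ((Xᘁ) ⊗ X) m).hom ≫ (σ.assoc (Xᘁ) X (F.F.obj m)).hom ≫
        (σ.act.obj (Xᘁ)).map ((F.str X m).inv ≫ s ≫ (G.str X m).hom) ≫
          (σ.assoc (Xᘁ) X (G.F.obj m)).inv ≫ evActHom σ X (G.F.obj m) := by
    simp only [bhom, ← Category.assoc]
    rw [hP2]
    simp only [Category.assoc, CategoryTheory.Functor.map_comp]
  rw [hL, hR, cancel_epi ((F.str ((Xᘁ) ⊗ X) m).hom),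
    cancel_epi ((σ.assoc (Xᘁ) X (F.F.obj m)).hom)]
  have hinj := (actHomEquiv σ X ((σ.act.obj X).obj (F.F.obj m)) (G.F.obj m)).injective
  constructor
  · intro h
    have h2 : (σ.act.obj X).map t = (F.str X m).inv ≫ s ≫ (G.str X m).hom := by
      apply hinj
      simpa [actHomEquiv] using h
    rw [h2, Iso.hom_inv_id_assoc]
  · intro h
    have h2 : (σ.act.obj X).map t = (F.str X m).inv ≫ s ≫ (G.str X m).hom := by
      rw [h, Iso.inv_hom_id_assoc]
    rw [h2]


/-- The pre-balancing of Proposition 4.1 on the Hom functor. -/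
def bBalancing :
    PreBalancing ρ ((F.F.op.prod G.F) ⋙ Functor.hom N ⋙ uliftFunctor.{u₁, v₂}) where
  iso X m n := Equiv.toIso (Equiv.ulift.trans ((bEquiv ρ σ F G X m n).trans
    Equiv.ulift.symm))
  natural X m m' n n' f g := by
    refine ConcreteCategory.hom_ext _ _ fun x => ?_
    apply ULift.ext
    show bEquiv ρ σ F G X m' n' (F.F.map f ≫ x.down ≫ G.F.map ((ρ.act.obj X).map g)) =
      F.F.map ((ρ.act.obj (Xᘁ)).map f) ≫ bEquiv ρ σ F G X m n x.down ≫ G.F.map g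
    erw [bEquiv_apply, bEquiv_apply]
    exact bhom_natural ρ σ F G X f g x.down
  natural_tensor {X X'} f m n := by
    refine ConcreteCategory.hom_ext _ _ fun x => ?_
    apply ULift.ext
    show bEquiv ρ σ F G X' m n (F.F.map (𝟙 m) ≫ x.down ≫ G.F.map ((ρ.act.map f).app n)) =
      F.F.map ((ρ.act.map ((fᘁ : (X'ᘁ) ⟶ (Xᘁ)))).app m) ≫
        bEquiv ρ σ F G X m n x.down ≫ G.F.map (𝟙 n)
    erw [bEquiv_apply, bEquiv_apply, CategoryTheory.Functor.map_id, Category.id_comp,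
      CategoryTheory.Functor.map_id, Category.comp_id]
    exact bhom_tensor ρ σ F G f m n x.down

lemma bBalancing_down (X : C) (m n : M)
    (y : ULift.{u₁} (F.F.obj m ⟶ G.F.obj ((ρ.act.obj X).obj n))) :
    (((bBalancing ρ σ F G).iso X m n).hom y).down = bEquiv ρ σ F G X m n y.down := rfl

lemma smap_down {m m' n n' : M} (f : m' ⟶ m) (g : n ⟶ n')
    (x : ULift.{u₁} (F.F.obj m ⟶ G.F.obj n)) :
    (smap ((F.F.op.prod G.F) ⋙ Functor.hom N ⋙ uliftFunctor.{u₁, v₂}) f g x).down =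
      F.F.map f ≫ x.down ≫ G.F.map g := rfl

/-- The space of module natural transformations as a cone over the Hom functor. -/
def bCone : ModuleEndCone (bBalancing ρ σ F G) (fun _ => True) where
  pt := { θ : F.F ⟶ G.F // IsModuleNatTrans F G θ }
  π m := TypeCat.ofHom fun x => ⟨x.1.app m⟩
  dinatural {m n} f := by
    refine ConcreteCategory.hom_ext _ _ fun x => ?_
    apply ULift.ext
    show F.F.map (𝟙 m) ≫ x.1.app m ≫ G.F.map f = F.F.map f ≫ x.1.app n ≫ G.F.map (𝟙 n)
    simp
  compat X _ m := by
    refine ConcreteCategory.hom_ext _ _ fun x => ?_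
    apply ULift.ext
    show F.F.map (evActHom ρ X m) ≫ x.1.app m ≫ G.F.map (𝟙 m) =
      F.F.map ((ρ.assoc (Xᘁ) X m).hom) ≫
        bEquiv ρ σ F G X ((ρ.act.obj X).obj m) m (x.1.app ((ρ.act.obj X).obj m)) ≫
          G.F.map (𝟙 m)
    simp only [CategoryTheory.Functor.map_id, Category.comp_id]
    rw [bEquiv_apply]
    exact (key_iff ρ σ F G X m _ _).mpr (x.2 X m)

lemma bCone_isEnd : IsModuleEnd (bCone ρ σ F G) := by
  intro E'
  have hdin : ∀ (x : E'.pt) {m n : M} (f : m ⟶ n),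
      F.F.map f ≫ (E'.π n x).down = (E'.π m x).down ≫ G.F.map f := by
    intro x m n f
    have h := congrArg ULift.down (types_congr_hom (E'.dinatural f) x)
    simp only [types_comp_apply] at h
    erw [smap_down, smap_down] at h
    have h2 := h.symm
    simp at h2
    exact h2
  have hmod : ∀ (x : E'.pt) (X : C) (m : M),
      F.F.map (evActHom ρ X m) ≫ (E'.π m x).down =
        F.F.map ((ρ.assoc (Xᘁ) X m).hom) ≫
          bhom ρ σ F G X ((ρ.act.obj X).obj m) m
            ((E'.π ((ρ.act.obj X).obj m) x).down) := by
    intro x X m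
    have h := congrArg ULift.down (types_congr_hom (E'.compat X trivial m) x)
    simp only [types_comp_apply] at h
    erw [smap_down, smap_down, bBalancing_down, bEquiv_apply] at h
    simp at h
    exact h
  refine ⟨TypeCat.ofHom fun x => ⟨⟨fun m => (E'.π m x).down, fun {m n} f => hdin x f⟩,
      fun X m => (key_iff ρ σ F G X m _ _).mp (hmod x X m)⟩, fun m => rfl, ?_⟩
  intro y hy
  refine ConcreteCategory.hom_ext _ _ fun x => ?_
  apply Subtype.ext
  apply NatTrans.ext
  funext m
  exact congrArg ULift.down (types_congr_hom (hy m) x)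

end Prop41


/-!
## STATEMENT 11

Module natural transformations as a module end (Proposition 4.1 of the paper):
for `C`-module functors `(F,c), (G,d) : M → N`, the functor
`Hom_N(F(-), G(-)) : Mᵒᵖ × M ⥤ vect_k` admits the pre-balancing
`β^X_{m,n}(α) = (ev_X ▷ id) ∘ m⁻¹ ∘ (id_{Xᘁ} ▷ (d_{X,n} ∘ α)) ∘ c_{Xᘁ,m}`, and
`Nat_m(F, G)` together with the evaluation maps `θ ↦ θ_m` is a module end of
`(Hom_N(F(-), G(-)), β)`.

(The hom-functor is composed with `uliftFunctor` for universe reasons.)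
-/

variable {k : Type w} [Field k]

theorem statement11
    {C : Type u} [Category.{v} C] [Abelian C] [CategoryTheory.Linear k C]
    [MonoidalCategory C] [MonoidalPreadditive C] [MonoidalLinear k C]
    [RigidCategory C] [Simple (𝟙_ C)]
    {M : Type u₁} [Category.{v₁} M] [Abelian M] [CategoryTheory.Linear k M]
    {N : Type u₂} [Category.{v₂} N] [Abelian N] [CategoryTheory.Linear k N]
    (ρ : LeftModuleStr C M) (σ : LeftModuleStr C N)
    (F G : ModuleFunctor ρ σ) :
    -- the Hom-functor `(m, n) ↦ Hom_N(F m, G n)`: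
    ∃ β : PreBalancing ρ
        ((F.F.op.prod G.F) ⋙ Functor.hom N ⋙ uliftFunctor.{u₁, v₂}),
      -- `β` is given by the formula of Proposition 4.1:
      (∀ (X : C) (m n : M)
          (α : ULift.{u₁} (F.F.obj m ⟶ G.F.obj ((ρ.act.obj X).obj n))),
        ((β.iso X m n).hom α).down =
          (F.str (Xᘁ) m).hom ≫
            (σ.act.obj (Xᘁ)).map (α.down ≫ (G.str X n).hom) ≫
              (σ.assoc (Xᘁ) X (G.F.obj n)).inv ≫
                evActHom σ X (G.F.obj n)) ∧
      -- and `Nat_m(F, G)`, with the evaluations `θ ↦ θ_m` as dinatural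
      -- transformations, is a module end of the Hom-functor:
      ∃ E : ModuleEndCone β (fun _ => True), IsModuleEnd E ∧
        ∃ eqv : E.pt ≃ { θ : F.F ⟶ G.F // IsModuleNatTrans F G θ },
          ∀ (x : E.pt) (m : M), (E.π m x).down = ((eqv x).1).app m := by
  refine ⟨bBalancing ρ σ F G, fun X m n α => ?_, bCone ρ σ F G, bCone_isEnd ρ σ F G,
    Equiv.refl _, fun x m => rfl⟩
  rw [bBalancing_down, bEquiv_apply]
  rfl
end TensorModuleEnd
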